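/- Let L > 0 and λ̃ > 0. If z : ℝ → ℝ is three times continuously differentiable on [0,L], satisfies z(0) = z(L) = 0 and z′(L) = 0, and satisfies λ̃·z(x) + z″′(x) + z′(x) = 0 for all x ∈ [0,L], then z(x) = 0 for all x ∈ [0,L]. -/

import Mathlib

/-- A positive real number `λ̃` is not an eigenvalue of the linear
Korteweg–de Vries operator: if `z` is three times continuously differentiable
on `[0,L]`, satisfies `z(0) = z(L) = z′(L) = 0` and
`λ̃ z + z″′ + z′ = 0` on `[0,L]`, then `z ≡ 0` on `[0,L]`. -/
theorem kdv_no_positive_eigenvalue (L lam : ℝ) (hL : 0 < L) (hlam : 0 < lam)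
    (z z₁ z₂ z₃ : ℝ → ℝ)
    (hz₁ : ∀ x ∈ Set.Icc (0:ℝ) L, HasDerivWithinAt z (z₁ x) (Set.Icc 0 L) x)
    (hz₂ : ∀ x ∈ Set.Icc (0:ℝ) L, HasDerivWithinAt z₁ (z₂ x) (Set.Icc 0 L) x)
    (hz₃ : ∀ x ∈ Set.Icc (0:ℝ) L, HasDerivWithinAt z₂ (z₃ x) (Set.Icc 0 L) x)
    (hz₃cont : ContinuousOn z₃ (Set.Icc 0 L))
    (hbc0 : z 0 = 0) (hbcL : z L = 0) (hbc1 : z₁ L = 0)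
    (heq : ∀ x ∈ Set.Icc (0:ℝ) L, lam * z x + z₃ x + z₁ x = 0) :
    ∀ x ∈ Set.Icc (0:ℝ) L, z x = 0 := by
  set G : ℝ → ℝ := fun y => z y * z₂ y - z₁ y * z₁ y / 2 + z y * z y / 2 with hGdef
  have hG : ∀ x ∈ Set.Icc (0:ℝ) L,
      HasDerivWithinAt G (-(lam * z x ^ 2)) (Set.Icc 0 L) x := by
    intro x hx
    have hA := (hz₁ x hx).mul (hz₃ x hx)
    have hB := ((hz₂ x hx).mul (hz₂ x hx)).div_const 2
    have hC := ((hz₁ x hx).mul (hz₁ x hx)).div_const 2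
    have h := (hA.sub hB).add hC
    refine (h.congr_of_mem (fun y _ => rfl) hx).congr_deriv (Eq.symm ?_)
    linear_combination (-(z x)) * heq x hx
  have hGcont : ContinuousOn G (Set.Icc 0 L) :=
    fun x hx => (hG x hx).continuousWithinAt
  have hanti : AntitoneOn G (Set.Icc 0 L) := by
    apply antitoneOn_of_hasDerivWithinAt_nonpos (f' := fun x => -(lam * z x ^ 2))
      (convex_Icc 0 L) hGcont
    · intro x hx
      exact ((hG x (interior_subset hx)).mono interior_subset)
    · intro x hx
      nlinarith [sq_nonneg (z x), hlam.le]
  have h0mem : (0:ℝ) ∈ Set.Icc (0:ℝ) L := ⟨le_refl 0, hL.le⟩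
  have hLmem : L ∈ Set.Icc (0:ℝ) L := ⟨hL.le, le_refl L⟩
  have hG0 : G 0 ≤ 0 := by
    simp only [hGdef, hbc0]
    nlinarith [sq_nonneg (z₁ 0)]
  have hGL : G L = 0 := by simp [hGdef, hbcL, hbc1]
  have hGzero : ∀ x ∈ Set.Icc (0:ℝ) L, G x = 0 := by
    intro x hx
    have h1 : G x ≤ G 0 := hanti h0mem hx hx.1
    have h2 : G L ≤ G x := hanti hx hLmem hx.2
    linarith
  intro x hx
  have hu := (uniqueDiffOn_Icc hL) x hx
  have hzero : HasDerivWithinAt G 0 (Set.Icc 0 L) x :=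
    (hasDerivWithinAt_const x _ (0:ℝ)).congr (fun y hy => hGzero y hy) (hGzero x hx)
  have := ((hG x hx).derivWithin hu).symm.trans (hzero.derivWithin hu)
  have h2 : z x ^ 2 = 0 := by nlinarith [sq_nonneg (z x)]
  exact pow_eq_zero_iff (two_ne_zero) |>.mp h2
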